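/- For all r ≥ 3, m̃_2(r) ≤ m̃'_2(r − 1): if there exists a unary (r−1)-uniform family of size m of partial functions to {0,1} with no coloring avoiding all its members, then there exists a non-2-DP-colorable r-uniform hypergraph with at most m edges. -/

import Mathlib

open Finset

/-- The domain of a partial map `φ : X ⇀ Bool` (encoded as `X → Option Bool`). -/
def pdom {X : Type*} [Fintype X] (φ : X → Option Bool) : Finset X :=
  Finset.univ.filter (fun x => (φ x).isSome)

/-- A total function `f : X → Bool` extends the partial map `φ`. -/
def PExtends {X : Type*} (f : X → Bool) (φ : X → Option Bool) : Prop :=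
  ∀ x b, φ x = some b → f x = b

instance {X : Type*} [Fintype X] (f : X → Bool) : DecidablePred (PExtends f) :=
  fun φ => inferInstanceAs (Decidable (∀ x b, φ x = some b → f x = b))

/-- The weight of a family of partial maps: `∑ 2^{-|dom φ|}`. -/
noncomputable def weight {X : Type*} [Fintype X] (F : Finset (X → Option Bool)) : ℝ :=
  ∑ φ ∈ F, (1/2 : ℝ) ^ (pdom φ).card

/-- `F` is a 2-fold cover of the hypergraph `H`. -/
def IsCover {X : Type*} [Fintype X] (H : Finset (Finset X)) (F : Finset (X → Option Bool)) : Prop :=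
  (∀ φ ∈ F, pdom φ ∈ H) ∧
  (∀ φ ∈ F, ∀ ψ ∈ F, φ ≠ ψ → pdom φ = pdom ψ → ∀ x ∈ pdom φ, φ x ≠ ψ x)

/-- Extend `φ` to `Fin (n+1)` with value `b` at the new vertex and old values xored by `b`. -/
def pext (n : ℕ) (b : Bool) (φ : Fin n → Option Bool) : Fin (n+1) → Option Bool :=
  fun x => if h : x = Fin.last n then some b else (φ (x.castPred h)).map (xor b)

lemma mem_pdom {X : Type*} [Fintype X] (φ : X → Option Bool) (x : X) :
    x ∈ pdom φ ↔ (φ x).isSome := by simp [pdom]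

def csEmb (n : ℕ) : Fin n ↪ Fin (n+1) := ⟨Fin.castSucc, Fin.castSucc_injective n⟩

lemma pdom_pext (n : ℕ) (b : Bool) (φ : Fin n → Option Bool) :
    pdom (pext n b φ) = insert (Fin.last n) ((pdom φ).map (csEmb n)) := by
  ext x
  by_cases hx : x = Fin.last n
  · subst hx
    simp [mem_pdom, pext]
  · simp only [mem_pdom, pext, dif_neg hx, Option.isSome_map, Finset.mem_insert,
      Finset.mem_map, csEmb, Function.Embedding.coeFn_mk, mem_pdom]
    constructor
    · intro hs
      exact Or.inr ⟨x.castPred hx, hs, Fin.castSucc_castPred x hx⟩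
    · rintro (h | ⟨y, hy, rfl⟩)
      · exact absurd h hx
      · simpa using hy

lemma last_not_mem (n : ℕ) (s : Finset (Fin n)) : Fin.last n ∉ s.map (csEmb n) := by
  simp only [Finset.mem_map, csEmb, Function.Embedding.coeFn_mk]
  rintro ⟨y, _, hy⟩
  exact absurd hy (Fin.ne_of_lt (Fin.castSucc_lt_last y))

theorem stmt_15 (r m : ℕ) (hr : 3 ≤ r) (n : ℕ) (F : Finset (Fin n → Option Bool))
    (huniform : ∀ φ ∈ F, (pdom φ).card = r - 1)
    (hunary : ∀ φ ∈ F, ∀ ψ ∈ F, pdom φ = pdom ψ → φ = ψ)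
    (hcard : F.card = m)
    (h : ∀ f : Fin n → Bool, ∃ φ ∈ F, PExtends f φ) :
    ∃ (n' : ℕ) (H : Finset (Finset (Fin n'))) (F' : Finset (Fin n' → Option Bool)),
      (∀ e ∈ H, e.card = r) ∧ H.card ≤ m ∧ IsCover H F' ∧
      (∀ f : Fin n' → Bool, ∃ φ ∈ F', PExtends f φ) := by
  refine ⟨n + 1, F.image (fun φ => insert (Fin.last n) ((pdom φ).map (csEmb n))),
    F.image (pext n false) ∪ F.image (pext n true), ?_, ?_, ⟨?_, ?_⟩, ?_⟩
  · rintro e he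
    simp only [Finset.mem_image] at he
    obtain ⟨φ, hφ, rfl⟩ := he
    rw [Finset.card_insert_of_notMem (last_not_mem n _), Finset.card_map, huniform φ hφ]
    omega
  · calc (F.image _).card ≤ F.card := Finset.card_image_le
      _ = m := hcard
  · intro φ' hφ'
    simp only [Finset.mem_union, Finset.mem_image] at hφ'
    rcases hφ' with ⟨φ, hφ, rfl⟩ | ⟨φ, hφ, rfl⟩ <;>
    · rw [pdom_pext]
      exact Finset.mem_image_of_mem _ hφ
  · intro φ' hφ' ψ' hψ' hne hdom x hx
    simp only [Finset.mem_union, Finset.mem_image] at hφ' hψ'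
    obtain ⟨φ, hφ, b, rfl⟩ : ∃ φ ∈ F, ∃ b, pext n b φ = φ' := by
      rcases hφ' with ⟨φ, hφ, rfl⟩ | ⟨φ, hφ, rfl⟩
      exacts [⟨φ, hφ, false, rfl⟩, ⟨φ, hφ, true, rfl⟩]
    obtain ⟨ψ, hψ, c, rfl⟩ : ∃ ψ ∈ F, ∃ c, pext n c ψ = ψ' := by
      rcases hψ' with ⟨ψ, hψ, rfl⟩ | ⟨ψ, hψ, rfl⟩
      exacts [⟨ψ, hψ, false, rfl⟩, ⟨ψ, hψ, true, rfl⟩]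
    have hdd : pdom φ = pdom ψ := by
      rw [pdom_pext, pdom_pext] at hdom
      have := congrArg (fun s => Finset.erase s (Fin.last n)) hdom
      simp only [Finset.erase_insert (last_not_mem n _)] at this
      exact Finset.map_injective _ this
    have hfe : φ = ψ := hunary φ hφ ψ hψ hdd
    subst hfe
    have hbc : b ≠ c := by rintro rfl; exact hne rfl
    by_cases hx' : x = Fin.last n
    · subst hx'
      simp only [pext, dif_pos rfl]
      simpa using hbc
    · rw [mem_pdom, pext, dif_neg hx', Option.isSome_map] at hx
      obtain ⟨v, hv⟩ := Option.isSome_iff_exists.mp hx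
      simp only [pext, dif_neg hx', hv, Option.map_some]
      intro hcon
      apply hbc
      have := Option.some.inj hcon
      cases b <;> cases c <;> cases v <;> simp_all
  · intro f
    obtain ⟨φ, hφ, hext⟩ := h (fun y => xor (f (Fin.last n)) (f y.castSucc))
    refine ⟨pext n (f (Fin.last n)) φ, ?_, ?_⟩
    · simp only [Finset.mem_union, Finset.mem_image]
      cases hb : f (Fin.last n)
      · exact Or.inl ⟨φ, hφ, rfl⟩
      · exact Or.inr ⟨φ, hφ, rfl⟩
    · intro x b hx
      by_cases hx' : x = Fin.last n
      · subst hx'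
        simp only [pext, dif_pos rfl] at hx
        exact Option.some.inj hx
      · simp only [pext, dif_neg hx'] at hx
        obtain ⟨v, hv, hbv⟩ := Option.map_eq_some_iff.mp hx
        have := hext _ v hv
        simp only [Fin.castSucc_castPred] at this
        subst hbv
        rw [← this]
        cases f (Fin.last n) <;> cases f x <;> simp
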